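/- Let Q ⊂ ℝ² be an axis-parallel square of side length r and let f be a measurable function on Q with ε₁ ≤ f ≤ ε₂ for constants 0 < ε₁ ≤ ε₂ < ∞. Let Z_1,…,Z_k (k ≥ 2) be i.i.d. random points in Q with law P(Z ∈ A) = (∫_{A∩Q} f)/(∫_Q f). Then there exist positive constants γ₁, γ₂, γ₃ depending only on ε₁ and ε₂ such that γ₁ r/√k ≤ E[d(Z_k, {Z_1,…,Z_{k−1}})] ≤ γ₂ r/√k and E[d²(Z_k, {Z_1,…,Z_{k−1}})] ≤ γ₃ r²/k, where d(x, B) = min_{y∈B} |x − y| denotes the Euclidean distance from the point x to the finite set B. -/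

import Mathlib

open MeasureTheory ProbabilityTheory Filter Finset
open scoped ENNReal Classical

noncomputable section

/-- Length of the closed tour visiting the points of `l` in cyclic order. -/
def tourLength (l : List (ℝ × ℝ)) : ℝ :=
  ((l.zip (l.rotate 1)).map fun p => dist p.1 p.2).sum

/-- TSP length of a finite set of points in the plane: the minimum over spanning cycles
(cyclic orderings of the points) of the total edge length; `0` if there are at most
two points. -/
def tspLength (P : Finset (ℝ × ℝ)) : ℝ :=
  if P.card ≤ 2 then 0
  else sInf {L : ℝ | ∃ l : List (ℝ × ℝ), l.Nodup ∧ l.toFinset = P ∧ L = tourLength l}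

/-- Axis-parallel square with lower-left corner `c` and side length `r`. -/
def square (c : ℝ × ℝ) (r : ℝ) : Set (ℝ × ℝ) := Set.Icc c (c.1 + r, c.2 + r)

def unitSquare : Set (ℝ × ℝ) := square (0, 0) 1



private lemma measurable_finset_inf' {ι Ω : Type*} [MeasurableSpace Ω] (s : Finset ι)
    (hs : s.Nonempty) (g : ι → Ω → ℝ) (hg : ∀ i, Measurable (g i)) :
    Measurable (fun ω => s.inf' hs (fun i => g i ω)) := by
  induction hs using Finset.Nonempty.cons_induction with
  | singleton a => simpa using hg a
  | cons a s ha hs ih =>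
      have : (fun ω => (Finset.cons a s ha).inf' (Finset.cons_nonempty ha)
          (fun i => g i ω)) = fun ω => min (g a ω) (s.inf' hs (fun i => g i ω)) := by
        funext ω; exact Finset.inf'_cons (H := hs) (f := fun x => g x ω) (hb := ha)
      rw [this]
      exact (hg a).min ih

private lemma icc_cover {m : ℕ} (hm : 0 < m) {u r : ℝ} (hr : 0 < r) {x : ℝ}
    (hx : x ∈ Set.Icc u (u + r)) :
    ∃ a : ℕ, a < m ∧ x ∈ Set.Icc (u + a * (r / m)) (u + (a + 1) * (r / m)) := by
  set s := r / m with hs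
  have hmR : (0:ℝ) < m := by exact_mod_cast hm
  have hspos : 0 < s := div_pos hr hmR
  have hms : (m : ℝ) * s = r := by rw [hs]; field_simp
  obtain ⟨hx1, hx2⟩ := hx
  rcases eq_or_lt_of_le hx2 with heq | hlt
  · refine ⟨m - 1, by omega, ?_, ?_⟩
    · have : ((m - 1 : ℕ) : ℝ) * s ≤ (m:ℝ) * s := by
        apply mul_le_mul_of_nonneg_right _ hspos.le
        exact_mod_cast Nat.sub_le m 1
      rw [heq]; linarith [hms]
    · have : ((m - 1 : ℕ) : ℝ) + 1 = (m : ℝ) := by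
        have : (1:ℕ) ≤ m := hm
        push_cast [Nat.cast_sub this]; ring
      rw [heq, this]; linarith [hms]
  · set a := ⌊(x - u) / s⌋₊ with ha
    have hnn : 0 ≤ (x - u) / s := div_nonneg (by linarith) hspos.le
    have hfl : (a : ℝ) ≤ (x - u) / s := Nat.floor_le hnn
    have hfu : (x - u) / s < a + 1 := Nat.lt_floor_add_one _
    have ham : a < m := by
      have : (a : ℝ) < m := by
        calc (a:ℝ) ≤ (x - u)/s := hfl
        _ < r / s := by gcongr <;> linarith
        _ = m := by rw [← hms]; field_simp
      exact_mod_cast this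
    refine ⟨a, ham, ?_, ?_⟩
    · have := (le_div_iff₀ hspos).mp hfl
      linarith
    · have := (div_lt_iff₀ hspos).mp hfu
      linarith

private lemma real_dist_le_of_Icc {a b x y : ℝ} (hx : x ∈ Set.Icc a b) (hy : y ∈ Set.Icc a b) :
    dist x y ≤ b - a := Real.dist_le_of_mem_Icc hx hy



set_option maxHeartbeats 1000000 in
/-- properties (b1)-(b2): two-sided bounds for the expected minimum
distance from the last of `k` i.i.d. points in a square of side `r` (with density bounded
between `ε₁` and `ε₂`) to the remaining points, and an upper bound for its second moment,
with constants depending only on `ε₁` and `ε₂`. -/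
theorem nearest_point_distance_moment_bounds
    (ε₁ ε₂ : ℝ) (hε₁ : 0 < ε₁) (hε₁₂ : ε₁ ≤ ε₂) :
    ∃ γ₁ γ₂ γ₃ : ℝ, 0 < γ₁ ∧ 0 < γ₂ ∧ 0 < γ₃ ∧
      ∀ (Ω : Type) (mΩ : MeasurableSpace Ω) (Pr : Measure Ω),
        IsProbabilityMeasure Pr →
      ∀ (c : ℝ × ℝ) (r : ℝ), 0 < r →
      ∀ f : ℝ × ℝ → ℝ, Measurable f →
        (∀ x ∈ square c r, ε₁ ≤ f x ∧ f x ≤ ε₂) →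
      ∀ (k : ℕ) (hk : 2 ≤ k), ∀ Z : Fin k → Ω → ℝ × ℝ,
        (∀ i, Measurable (Z i)) →
        iIndepFun Z Pr →
        (∀ i, Measure.map (Z i) Pr =
          (volume.restrict (square c r)).withDensity
            fun x => ENNReal.ofReal (f x / ∫ y in square c r, f y)) →
        (γ₁ * r / Real.sqrt k ≤
            ∫ ω, Metric.infDist (Z ((⟨k - 1, by omega⟩ : Fin k)) ω)
              {p | ∃ i : Fin k, (i : ℕ) < k - 1 ∧ p = Z i ω} ∂Pr) ∧
        ((∫ ω, Metric.infDist (Z ((⟨k - 1, by omega⟩ : Fin k)) ω)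
              {p | ∃ i : Fin k, (i : ℕ) < k - 1 ∧ p = Z i ω} ∂Pr) ≤
          γ₂ * r / Real.sqrt k) ∧
        (∫ ω, (Metric.infDist (Z ((⟨k - 1, by omega⟩ : Fin k)) ω)
              {p | ∃ i : Fin k, (i : ℕ) < k - 1 ∧ p = Z i ω}) ^ 2 ∂Pr ≤
          γ₃ * r ^ 2 / k) := by
  have hε₂ : 0 < ε₂ := lt_of_lt_of_le hε₁ hε₁₂
  refine ⟨Real.sqrt (ε₁/(8*ε₂))/2, (1 + 8*ε₂^2/ε₁^2)/2, 8*ε₂^2/ε₁^2, ?_, ?_, ?_, ?_⟩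
  · positivity
  · positivity
  · positivity
  intro Ω mΩ Pr hPr c r hr f hfmeas hfb k hk Z hZmeas hZindep hZlaw
  simp only [square] at hfb hZlaw ⊢
  set Q : Set (ℝ × ℝ) := Set.Icc c (c.1 + r, c.2 + r) with hQdef
  have hQmeas : MeasurableSet Q := measurableSet_Icc
  have hvolQ : volume Q = ENNReal.ofReal r * ENNReal.ofReal r := by
    rw [hQdef, Set.Icc_prod_eq, Measure.volume_eq_prod, Measure.prod_prod,
      Real.volume_Icc, Real.volume_Icc]
    simp
  have hvolQtop : volume Q ≠ ⊤ := by rw [hvolQ]; exact (ENNReal.mul_lt_top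
    ENNReal.ofReal_lt_top ENNReal.ofReal_lt_top).ne
  haveI hQfin : IsFiniteMeasure (volume.restrict Q) :=
    ⟨by rw [Measure.restrict_apply_univ]; exact lt_of_le_of_ne le_top hvolQtop⟩
  have hvolQtoReal : (volume Q).toReal = r ^ 2 := by
    rw [hvolQ, ← ENNReal.ofReal_mul hr.le, ENNReal.toReal_ofReal (by positivity)]
    ring
  -- integrability of f on Q
  have hfint : IntegrableOn f Q := by
    refine Integrable.mono' (integrable_const ε₂) hfmeas.aestronglyMeasurable.restrict ?_
    refine (ae_restrict_iff' hQmeas).2 (Filter.Eventually.of_forall fun x hx => ?_)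
    have := hfb x hx
    rw [Real.norm_eq_abs, abs_le]
    constructor <;> nlinarith [this.1, this.2]
  set I : ℝ := ∫ y in Q, f y with hIdef
  have hI1 : ε₁ * r ^ 2 ≤ I := by
    have : ∫ _ in Q, ε₁ ∂volume ≤ I :=
      setIntegral_mono_on (integrableOn_const hvolQtop)
        hfint hQmeas fun x hx => (hfb x hx).1
    rwa [setIntegral_const, smul_eq_mul, measureReal_def, hvolQtoReal, mul_comm] at this
  have hI2 : I ≤ ε₂ * r ^ 2 := by
    have : I ≤ ∫ _ in Q, ε₂ ∂volume :=
      setIntegral_mono_on hfint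
        (integrableOn_const hvolQtop)
        hQmeas fun x hx => (hfb x hx).2
    rwa [setIntegral_const, smul_eq_mul, measureReal_def, hvolQtoReal, mul_comm] at this
  have hIpos : 0 < I := lt_of_lt_of_le (by positivity) hI1
  set ν : Measure (ℝ × ℝ) :=
    (volume.restrict Q).withDensity (fun x => ENNReal.ofReal (f x / I)) with hνdef
  have hmap : ∀ i, Measure.map (Z i) Pr = ν := hZlaw
  have hνapply : ∀ A : Set (ℝ × ℝ), MeasurableSet A →
      ν A = ∫⁻ x in A ∩ Q, ENNReal.ofReal (f x / I) ∂volume := by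
    intro A hA
    rw [hνdef, withDensity_apply _ hA, Measure.restrict_restrict hA]
  have hν_le : ∀ A : Set (ℝ × ℝ), MeasurableSet A →
      ν A ≤ ENNReal.ofReal (ε₂ / (ε₁ * r ^ 2)) * volume A := by
    intro A hA
    rw [hνapply A hA]
    calc ∫⁻ x in A ∩ Q, ENNReal.ofReal (f x / I) ∂volume
        ≤ ∫⁻ _ in A ∩ Q, ENNReal.ofReal (ε₂ / (ε₁ * r ^ 2)) ∂volume := by
          refine setLIntegral_mono measurable_const fun x hx => ?_
          refine ENNReal.ofReal_le_ofReal ?_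
          exact div_le_div₀ hε₂.le (hfb x hx.2).2 (by positivity) hI1
      _ ≤ ENNReal.ofReal (ε₂ / (ε₁ * r ^ 2)) * volume A := by
          rw [setLIntegral_const]
          exact mul_le_mul_right (measure_mono Set.inter_subset_left) _
  have hν_ge : ∀ A : Set (ℝ × ℝ), MeasurableSet A → A ⊆ Q →
      ENNReal.ofReal (ε₁ / (ε₂ * r ^ 2)) * volume A ≤ ν A := by
    intro A hA hAQ
    rw [hνapply A hA, Set.inter_eq_self_of_subset_left hAQ]
    calc ENNReal.ofReal (ε₁ / (ε₂ * r ^ 2)) * volume A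
        = ∫⁻ _ in A, ENNReal.ofReal (ε₁ / (ε₂ * r ^ 2)) ∂volume := by
          rw [setLIntegral_const]
      _ ≤ ∫⁻ x in A, ENNReal.ofReal (f x / I) ∂volume := by
          refine setLIntegral_mono ((hfmeas.div_const I).ennreal_ofReal) fun x hx => ?_
          refine ENNReal.ofReal_le_ofReal ?_
          exact div_le_div₀ (le_trans hε₁.le (hfb x (hAQ hx)).1) (hfb x (hAQ hx)).1
            hIpos hI2
  have hνQc : ν Qᶜ = 0 := by
    rw [hνapply _ hQmeas.compl, Set.compl_inter_self, Measure.restrict_empty,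
      lintegral_zero_measure]
  haveI hνprob : IsProbabilityMeasure ν := by
    rw [← hmap ⟨0, by omega⟩]
    exact Measure.isProbabilityMeasure_map (hZmeas _).aemeasurable
  have hZae : ∀ i, ∀ᵐ ω ∂Pr, Z i ω ∈ Q := by
    intro i
    rw [ae_iff]
    have : {ω | ¬ Z i ω ∈ Q} = Z i ⁻¹' Qᶜ := rfl
    rw [this, ← Measure.map_apply (hZmeas i) hQmeas.compl, hmap i, hνQc]
  have hQdist : ∀ x ∈ Q, ∀ y ∈ Q, dist x y ≤ r := by
    intro x hx y hy
    rw [hQdef, Set.Icc_prod_eq] at hx hy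
    rw [Prod.dist_eq, max_le_iff]
    constructor
    · simpa using real_dist_le_of_Icc hx.1 hy.1
    · simpa using real_dist_le_of_Icc hx.2 hy.2
  -- index set machinery
  set lastI : Fin k := ⟨k - 1, by omega⟩ with hlastIdef
  set T : Finset (Fin k) := Finset.univ.filter (fun i : Fin k => (i : ℕ) < k - 1) with hTdef
  have hmemT : ∀ i : Fin k, i ∈ T ↔ (i : ℕ) < k - 1 := by
    intro i; simp [hTdef]
  have hi0T : (⟨0, by omega⟩ : Fin k) ∈ T := by rw [hmemT]; simp; omega
  have hTne : T.Nonempty := ⟨_, hi0T⟩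
  have hTerase : T = Finset.univ.erase lastI := by
    ext i
    rw [hmemT, Finset.mem_erase]
    have hik := i.isLt
    simp only [Finset.mem_univ, and_true, Ne, Fin.ext_iff, hlastIdef]
    omega
  have hTcard : T.card = k - 1 := by
    rw [hTerase, Finset.card_erase_of_mem (Finset.mem_univ _), Finset.card_univ,
      Fintype.card_fin]
  -- the nearest-neighbour distance
  set D : Ω → ℝ := fun ω => Metric.infDist (Z lastI ω)
      {p | ∃ i : Fin k, (i : ℕ) < k - 1 ∧ p = Z i ω} with hDdef
  have hSet : ∀ ω, {p | ∃ i : Fin k, (i : ℕ) < k - 1 ∧ p = Z i ω}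
      = (fun i => Z i ω) '' ↑T := by
    intro ω
    ext p
    simp only [Set.mem_setOf_eq, Set.mem_image, Finset.mem_coe, hmemT]
    constructor
    · rintro ⟨i, hi, rfl⟩; exact ⟨i, hi, rfl⟩
    · rintro ⟨i, hi, rfl⟩; exact ⟨i, hi, rfl⟩
  have hD_eq : ∀ ω, D ω = T.inf' hTne (fun i => dist (Z lastI ω) (Z i ω)) := by
    intro ω
    rw [hDdef]
    simp only [hSet ω]
    apply le_antisymm
    · obtain ⟨i, hiT, hval⟩ := Finset.exists_mem_eq_inf' hTne
        (fun i => dist (Z lastI ω) (Z i ω))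
      rw [hval]
      exact Metric.infDist_le_dist_of_mem ⟨i, hiT, rfl⟩
    · have hfin : ((fun i => Z i ω) '' ↑T).Finite := T.finite_toSet.image _
      obtain ⟨y, hyS, hEq⟩ := hfin.isCompact.exists_infDist_eq_dist
        ⟨_, Set.mem_image_of_mem _ hi0T⟩ (Z lastI ω)
      rw [hEq]
      obtain ⟨i, hiT, rfl⟩ := hyS
      exact Finset.inf'_le _ hiT
  have hD_nonneg : ∀ ω, 0 ≤ D ω := fun ω => Metric.infDist_nonneg
  have hD_meas : Measurable D := by
    have : D = fun ω => T.inf' hTne (fun i => dist (Z lastI ω) (Z i ω)) := funext hD_eq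
    rw [this]
    exact measurable_finset_inf' T hTne _ fun i => (hZmeas lastI).dist (hZmeas i)
  have hD_le_dist : ∀ ω, ∀ i ∈ T, D ω ≤ dist (Z lastI ω) (Z i ω) := by
    intro ω i hi
    rw [hD_eq ω]
    exact Finset.inf'_le _ hi
  have hD_le_r : ∀ᵐ ω ∂Pr, D ω ≤ r := by
    filter_upwards [hZae lastI, hZae ⟨0, by omega⟩] with ω h1 h2
    exact le_trans (hD_le_dist ω _ hi0T) (hQdist _ h1 _ h2)
  have hD_int : Integrable D Pr := by
    refine Integrable.mono' (integrable_const r) hD_meas.aestronglyMeasurable ?_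
    filter_upwards [hD_le_r] with ω h
    rw [Real.norm_eq_abs, abs_of_nonneg (hD_nonneg ω)]; exact h
  have hD2_int : Integrable (fun ω => D ω ^ 2) Pr := by
    refine Integrable.mono' (integrable_const (r ^ 2)) (hD_meas.pow_const 2).aestronglyMeasurable ?_
    filter_upwards [hD_le_r] with ω h
    rw [Real.norm_eq_abs, abs_of_nonneg (by positivity)]
    exact pow_le_pow_left₀ (hD_nonneg ω) h 2
  -- tail bound
  have htail : ∀ t : ℝ, 0 < t →
      (Pr {ω | t < D ω}).toReal ≤
        ε₂ / ε₁ * Real.exp (-(((k - 1 : ℕ) : ℝ) * (ε₁ / (4 * ε₂)) * t ^ 2 / r ^ 2)) := by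
    intro t ht
    by_cases htr : t ≤ r
    swap
    · have hnull : Pr {ω | t < D ω} = 0 := by
        refine measure_mono_null (fun ω hω => ?_) (ae_iff.mp hD_le_r)
        simp only [Set.mem_setOf_eq] at hω ⊢
        push_neg at htr ⊢
        linarith
      rw [hnull, ENNReal.toReal_zero]
      positivity
    · set m : ℕ := ⌈r / t⌉₊ with hmdef
      have hm : 0 < m := Nat.ceil_pos.2 (div_pos hr ht)
      have hmR : (0 : ℝ) < m := by exact_mod_cast hm
      set s : ℝ := r / m with hsdef
      have hspos : 0 < s := div_pos hr hmR
      have hms : (m : ℝ) * s = r := by rw [hsdef]; field_simp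
      have hst : s ≤ t := by
        rw [hsdef, div_le_iff₀ hmR]
        have h1 : r / t ≤ (m : ℝ) := Nat.le_ceil _
        calc r = (r / t) * t := by field_simp
        _ ≤ (m : ℝ) * t := by nlinarith
        _ = t * m := by ring
      have hts : t ≤ 2 * s := by
        have h1 : (m : ℝ) < r / t + 1 := Nat.ceil_lt_add_one (by positivity)
        have h2 : (1 : ℝ) ≤ r / t := (one_le_div ht).2 htr
        have h3 : (m : ℝ) ≤ 2 * (r / t) := by linarith
        have h4 : t * m ≤ 2 * r := by
          calc t * m ≤ t * (2 * (r / t)) := by nlinarith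
          _ = 2 * r := by field_simp
        have h5 : t * m ≤ (2 * s) * m := by rw [← hms] at h4; linarith
        exact le_of_mul_le_mul_right h5 hmR
      set x : ℝ := ε₁ / (ε₂ * r ^ 2) * s ^ 2 with hxdef
      have hx_pos : 0 < x := by positivity
      have hx_le : x ≤ 1 := by
        rw [hxdef, div_mul_eq_mul_div, div_le_one (by positivity)]
        have hsr : s ≤ r := le_trans hst htr
        have h1 : s ^ 2 ≤ r ^ 2 := by nlinarith
        exact mul_le_mul hε₁₂ h1 (by positivity) hε₂.le
      -- the grid cells
      set Co : Fin m → Fin m → Set (ℝ × ℝ) := fun a b =>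
        Set.Ico (c.1 + (a : ℕ) * s) (c.1 + ((a : ℕ) + 1) * s) ×ˢ
          Set.Ico (c.2 + (b : ℕ) * s) (c.2 + ((b : ℕ) + 1) * s) with hCodef
      set Cc : Fin m → Fin m → Set (ℝ × ℝ) := fun a b =>
        Set.Icc (c.1 + (a : ℕ) * s) (c.1 + ((a : ℕ) + 1) * s) ×ˢ
          Set.Icc (c.2 + (b : ℕ) * s) (c.2 + ((b : ℕ) + 1) * s) with hCcdef
      have hCoCc : ∀ a b, Co a b ⊆ Cc a b := fun a b =>
        Set.prod_mono Set.Ico_subset_Icc_self Set.Ico_subset_Icc_self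
      have hCcQ : ∀ a b, Cc a b ⊆ Q := by
        intro a b
        rw [hCcdef, hQdef, Set.Icc_prod_eq]
        have hsub : ∀ (u : ℝ) (j : Fin m), Set.Icc (u + (j : ℕ) * s) (u + ((j : ℕ) + 1) * s)
            ⊆ Set.Icc u (u + r) := by
          intro u j
          apply Set.Icc_subset_Icc
          · have : (0 : ℝ) ≤ (j : ℕ) * s := by positivity
            linarith
          · have hj : ((j : ℕ) : ℝ) + 1 ≤ (m : ℝ) := by exact_mod_cast j.isLt
            have : ((j : ℕ) + 1 : ℝ) * s ≤ (m : ℝ) * s := by nlinarith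
            rw [hms] at this
            linarith
        exact Set.prod_mono (hsub c.1 a) (hsub c.2 b)
      have hCc_diam : ∀ a b, ∀ p ∈ Cc a b, ∀ q ∈ Cc a b, dist p q ≤ s := by
        intro a b p hp q hq
        rw [hCcdef] at hp hq
        rw [Prod.dist_eq, max_le_iff]
        constructor
        · have := real_dist_le_of_Icc hp.1 hq.1
          calc dist p.1 q.1 ≤ (c.1 + ((a:ℕ) + 1) * s) - (c.1 + (a:ℕ) * s) := this
          _ = s := by ring
        · have := real_dist_le_of_Icc hp.2 hq.2
          calc dist p.2 q.2 ≤ (c.2 + ((b:ℕ) + 1) * s) - (c.2 + (b:ℕ) * s) := this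
          _ = s := by ring
      have hCo_meas : ∀ a b, MeasurableSet (Co a b) := fun a b =>
        measurableSet_Ico.prod measurableSet_Ico
      have hCc_meas : ∀ a b, MeasurableSet (Cc a b) := fun a b =>
        measurableSet_Icc.prod measurableSet_Icc
      have hvol_pair : ∀ (u v : ℝ), u ≤ v → volume (Set.Ico u v) = ENNReal.ofReal (v - u) :=
        fun u v _ => Real.volume_Ico
      have hvolCo : ∀ a b, volume (Co a b) = ENNReal.ofReal (s ^ 2) := by
        intro a b
        rw [hCodef]
        rw [Measure.volume_eq_prod, Measure.prod_prod, Real.volume_Ico, Real.volume_Ico]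
        rw [← ENNReal.ofReal_mul (by nlinarith)]
        congr 1
        ring
      have hvolCc : ∀ a b, volume (Cc a b) = ENNReal.ofReal (s ^ 2) := by
        intro a b
        rw [hCcdef]
        rw [Measure.volume_eq_prod, Measure.prod_prod, Real.volume_Icc, Real.volume_Icc]
        rw [← ENNReal.ofReal_mul (by nlinarith)]
        congr 1
        ring
      have hq_ge : ∀ a b, ENNReal.ofReal x ≤ ν (Co a b) := by
        intro a b
        have := hν_ge (Co a b) (hCo_meas a b) ((hCoCc a b).trans (hCcQ a b))
        rw [hvolCo a b, ← ENNReal.ofReal_mul (by positivity)] at this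
        exact this
      have hCc_le : ∀ a b, ν (Cc a b) ≤ ENNReal.ofReal (ε₂ / (ε₁ * r ^ 2) * s ^ 2) := by
        intro a b
        have := hν_le (Cc a b) (hCc_meas a b)
        rw [hvolCc a b, ← ENNReal.ofReal_mul (by positivity)] at this
        exact this
      set E : Fin m → Fin m → Set Ω := fun a b =>
        (Z lastI ⁻¹' Cc a b) ∩ ⋂ i ∈ T, Z i ⁻¹' (Co a b)ᶜ with hEdef
      set B : ℝ≥0∞ := ENNReal.ofReal (ε₂ / (ε₁ * r ^ 2) * s ^ 2) *
        ENNReal.ofReal ((1 - x) ^ (k - 1)) with hBdef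
      have hEbound : ∀ a b, Pr (E a b) ≤ B := by
        intro a b
        classical
        set sets : Fin k → Set (ℝ × ℝ) := fun i => if i = lastI then Cc a b else (Co a b)ᶜ
          with hsetsdef
        have hsetsmeas : ∀ i, i ∈ (Finset.univ : Finset (Fin k)) → MeasurableSet (sets i) := by
          intro i _
          simp only [hsetsdef]
          split_ifs
          · exact hCc_meas a b
          · exact (hCo_meas a b).compl
        have hkey := hZindep.measure_inter_preimage_eq_mul Finset.univ hsetsmeas
        have hIntEq : (⋂ i ∈ (Finset.univ : Finset (Fin k)), Z i ⁻¹' sets i) = E a b := by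
          ext ω
          simp only [Set.mem_iInter, Finset.mem_univ, forall_true_left, hEdef,
            Set.mem_inter_iff, Set.mem_preimage, true_implies]
          constructor
          · intro h
            refine ⟨by have := h lastI; simp only [hsetsdef, if_pos rfl] at this; exact this, ?_⟩
            intro i hi
            have hne : i ≠ lastI := by
              rw [hTerase, Finset.mem_erase] at hi
              exact hi.1
            have := h i
            simp only [hsetsdef] at this
            rwa [if_neg hne] at this
          · rintro ⟨h1, h2⟩ i
            simp only [hsetsdef]
            by_cases hi : i = lastI
            · rw [if_pos hi]; exact hi ▸ h1
            · rw [if_neg hi]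
              have hiT : i ∈ T := by
                rw [hTerase, Finset.mem_erase]
                exact ⟨hi, Finset.mem_univ i⟩
              exact h2 i hiT
        have hprod : ∏ i, Pr (Z i ⁻¹' sets i)
            = ν (Cc a b) * (1 - ν (Co a b)) ^ (k - 1) := by
          rw [← Finset.mul_prod_erase Finset.univ _ (Finset.mem_univ lastI), ← hTerase]
          have h1 : Pr (Z lastI ⁻¹' sets lastI) = ν (Cc a b) := by
            simp only [hsetsdef, if_pos rfl]
            rw [← Measure.map_apply (hZmeas lastI) (hCc_meas a b), hmap lastI]
          have h2 : ∀ i ∈ T, Pr (Z i ⁻¹' sets i) = 1 - ν (Co a b) := by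
            intro i hi
            have hne : i ≠ lastI := by
              rw [hTerase, Finset.mem_erase] at hi
              exact hi.1
            simp only [hsetsdef, if_neg hne]
            rw [← Measure.map_apply (hZmeas i) (hCo_meas a b).compl, hmap i]
            exact prob_compl_eq_one_sub (hCo_meas a b)
          rw [h1, Finset.prod_congr rfl h2, Finset.prod_const, hTcard]
        have hmeasE : Pr (E a b) = ν (Cc a b) * (1 - ν (Co a b)) ^ (k - 1) := by
          rw [← hIntEq, hkey, hprod]
        rw [hmeasE, hBdef]
        refine mul_le_mul' (hCc_le a b) ?_
        have h3 : (1 : ℝ≥0∞) - ν (Co a b) ≤ ENNReal.ofReal (1 - x) := by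
          rw [ENNReal.ofReal_sub _ hx_pos.le, ENNReal.ofReal_one]
          exact tsub_le_tsub_left (hq_ge a b) 1
        calc (1 - ν (Co a b)) ^ (k - 1) ≤ (ENNReal.ofReal (1 - x)) ^ (k - 1) :=
              pow_le_pow_left' h3 (k - 1)
        _ = ENNReal.ofReal ((1 - x) ^ (k - 1)) := by
              rw [ENNReal.ofReal_pow (by linarith)]
      have hNnull : Pr {ω | ¬ ∀ i, Z i ω ∈ Q} = 0 := by
        have hset : {ω | ¬ ∀ i, Z i ω ∈ Q} = ⋃ i, {ω | Z i ω ∉ Q} := by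
          ext ω; simp [not_forall]
        rw [hset]
        exact measure_iUnion_null fun i => ae_iff.mp (hZae i)
      have hcover : {ω | t < D ω} ⊆ (⋃ (a : Fin m) (b : Fin m), E a b)
          ∪ {ω | ¬ ∀ i, Z i ω ∈ Q} := by
        intro ω hω
        by_cases hG : ∀ i, Z i ω ∈ Q
        swap
        · exact Or.inr hG
        left
        have hlQ := hG lastI
        rw [hQdef, Set.Icc_prod_eq] at hlQ
        obtain ⟨a, ham, hax⟩ := icc_cover hm hr hlQ.1
        obtain ⟨b, hbm, hbx⟩ := icc_cover hm hr hlQ.2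
        simp only [Set.mem_iUnion]
        refine ⟨⟨a, ham⟩, ⟨b, hbm⟩, ?_⟩
        rw [hEdef]
        constructor
        · rw [Set.mem_preimage, hCcdef]
          exact ⟨hax, hbx⟩
        · simp only [Set.mem_iInter, Set.mem_preimage, Set.mem_compl_iff]
          intro i hi hmem
          have h1 : Z i ω ∈ Cc ⟨a, ham⟩ ⟨b, hbm⟩ := hCoCc _ _ hmem
          have h2 : Z lastI ω ∈ Cc ⟨a, ham⟩ ⟨b, hbm⟩ := by
            rw [hCcdef]; exact ⟨hax, hbx⟩
          have h3 : dist (Z lastI ω) (Z i ω) ≤ s := hCc_diam _ _ _ h2 _ h1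
          have h4 : D ω ≤ s := le_trans (hD_le_dist ω i hi) h3
          have : t < s := lt_of_lt_of_le hω h4
          linarith [hst]
      have hsum : Pr {ω | t < D ω} ≤ (m : ℝ≥0∞) * ((m : ℝ≥0∞) * B) := by
        calc Pr {ω | t < D ω}
            ≤ Pr ((⋃ (a : Fin m) (b : Fin m), E a b) ∪ {ω | ¬ ∀ i, Z i ω ∈ Q}) :=
              measure_mono hcover
        _ ≤ Pr (⋃ (a : Fin m) (b : Fin m), E a b) + Pr {ω | ¬ ∀ i, Z i ω ∈ Q} :=
              measure_union_le _ _
        _ = Pr (⋃ (a : Fin m) (b : Fin m), E a b) := by rw [hNnull, add_zero]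
        _ ≤ ∑' a : Fin m, Pr (⋃ b : Fin m, E a b) := measure_iUnion_le _
        _ ≤ ∑' a : Fin m, ((m : ℝ≥0∞) * B) := by
              refine ENNReal.tsum_le_tsum fun a => ?_
              calc Pr (⋃ b : Fin m, E a b) ≤ ∑' b : Fin m, Pr (E a b) := measure_iUnion_le _
              _ ≤ ∑' b : Fin m, B := ENNReal.tsum_le_tsum fun b => hEbound a b
              _ = (m : ℝ≥0∞) * B := by
                    rw [tsum_fintype, Finset.sum_const, Finset.card_univ, Fintype.card_fin,
                      nsmul_eq_mul]
        _ = (m : ℝ≥0∞) * ((m : ℝ≥0∞) * B) := by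
              rw [tsum_fintype, Finset.sum_const, Finset.card_univ, Fintype.card_fin,
                nsmul_eq_mul]
      have hz : (0:ℝ) ≤ (1 - x) ^ (k - 1) := pow_nonneg (by linarith) _
      have hm2B : (m : ℝ≥0∞) * ((m : ℝ≥0∞) * B) =
          ENNReal.ofReal (ε₂ / ε₁ * (1 - x) ^ (k - 1)) := by
        rw [hBdef, ← ENNReal.ofReal_natCast m]
        rw [← ENNReal.ofReal_mul (by positivity), ← ENNReal.ofReal_mul (by positivity),
          ← ENNReal.ofReal_mul (by positivity)]
        congr 1
        have hms2 : (m : ℝ) ^ 2 * s ^ 2 = r ^ 2 := by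
          rw [← mul_pow, hms]
        calc (m:ℝ) * ((m:ℝ) * (ε₂ / (ε₁ * r ^ 2) * s ^ 2 * (1 - x) ^ (k - 1)))
            = ((m:ℝ) ^ 2 * s ^ 2) * (ε₂ / (ε₁ * r ^ 2)) * (1 - x) ^ (k - 1) := by ring
        _ = r ^ 2 * (ε₂ / (ε₁ * r ^ 2)) * (1 - x) ^ (k - 1) := by rw [hms2]
        _ = ε₂ / ε₁ * (1 - x) ^ (k - 1) := by
              field_simp
      have htoReal : (Pr {ω | t < D ω}).toReal ≤ ε₂ / ε₁ * (1 - x) ^ (k - 1) := by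
        refine ENNReal.toReal_le_of_le_ofReal (mul_nonneg (by positivity) hz) ?_
        rw [← hm2B]
        exact hsum
      refine le_trans htoReal ?_
      have hbase : (1 - x) ≤ Real.exp (-x) := by
        have := Real.add_one_le_exp (-x)
        linarith
      have hpow : (1 - x) ^ (k - 1) ≤ Real.exp (-(((k - 1 : ℕ) : ℝ) * x)) := by
        calc (1 - x) ^ (k - 1) ≤ (Real.exp (-x)) ^ (k - 1) :=
              pow_le_pow_left₀ (by linarith) hbase _
        _ = Real.exp (-(((k - 1 : ℕ) : ℝ) * x)) := by
              rw [← Real.exp_nat_mul]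
              congr 1
              ring
      have hxlb : ε₁ / (4 * ε₂) * t ^ 2 / r ^ 2 ≤ x := by
        rw [hxdef]
        have hs2 : t ^ 2 / 4 ≤ s ^ 2 := by nlinarith [hts, hspos.le, ht.le]
        have heq : ε₁ / (4 * ε₂) * t ^ 2 / r ^ 2 = ε₁ / (ε₂ * r ^ 2) * (t ^ 2 / 4) := by
          field_simp
        rw [heq]
        exact mul_le_mul_of_nonneg_left hs2 (by positivity)
      have hexp : Real.exp (-(((k - 1 : ℕ) : ℝ) * x)) ≤
          Real.exp (-(((k - 1 : ℕ) : ℝ) * (ε₁ / (4 * ε₂)) * t ^ 2 / r ^ 2)) := by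
        apply Real.exp_le_exp.2
        have hk1 : (0 : ℝ) ≤ ((k - 1 : ℕ) : ℝ) := Nat.cast_nonneg _
        have : ((k - 1 : ℕ) : ℝ) * (ε₁ / (4 * ε₂)) * t ^ 2 / r ^ 2
            = ((k - 1 : ℕ) : ℝ) * (ε₁ / (4 * ε₂) * t ^ 2 / r ^ 2) := by ring
        rw [this]
        apply neg_le_neg
        exact mul_le_mul_of_nonneg_left hxlb hk1
      calc ε₂ / ε₁ * (1 - x) ^ (k - 1)
          ≤ ε₂ / ε₁ * Real.exp (-(((k - 1 : ℕ) : ℝ) * x)) := by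
            apply mul_le_mul_of_nonneg_left hpow (by positivity)
      _ ≤ _ := by
            apply mul_le_mul_of_nonneg_left hexp (by positivity)
  -- cast facts
  have hk1pos : (0:ℝ) < ((k - 1 : ℕ) : ℝ) := by
    have : 0 < k - 1 := by omega
    exact_mod_cast this
  have hkpos : (0:ℝ) < (k : ℝ) := by positivity
  have hskpos : 0 < Real.sqrt k := Real.sqrt_pos.2 hkpos
  have hsksq : Real.sqrt k * Real.sqrt k = (k:ℝ) := Real.mul_self_sqrt hkpos.le
  -- second moment bound
  set b : ℝ := ((k - 1 : ℕ) : ℝ) * (ε₁ / (4 * ε₂)) / r ^ 2 with hbdef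
  have hb : 0 < b := by positivity
  have hlayer : ∫ ω, D ω ^ 2 ∂Pr = ∫ t in Set.Ioi 0, (Pr {ω | t < D ω ^ 2}).toReal :=
    hD2_int.integral_eq_integral_meas_lt (Filter.Eventually.of_forall fun ω => by positivity)
  have hsetEq : ∀ t : ℝ, 0 < t → {ω | t < D ω ^ 2} = {ω | Real.sqrt t < D ω} := by
    intro t ht
    ext ω
    simp only [Set.mem_setOf_eq]
    constructor
    · intro h
      have hD0 : 0 < D ω := by nlinarith [hD_nonneg ω]
      exact (Real.sqrt_lt' hD0).2 h
    · intro h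
      have hD0 : 0 < D ω := lt_of_le_of_lt (Real.sqrt_nonneg t) h
      exact (Real.sqrt_lt' hD0).1 h
  have hg_anti : Antitone (fun t => (Pr {ω | t < D ω ^ 2}).toReal) := by
    intro t1 t2 h12
    refine ENNReal.toReal_mono (measure_ne_top Pr _) ?_
    exact measure_mono fun ω hω => lt_of_le_of_lt h12 hω
  have hg_le : ∀ t ∈ Set.Ioi 0, (Pr {ω | t < D ω ^ 2}).toReal
      ≤ ε₂ / ε₁ * Real.exp (-(b * t)) := by
    intro t ht
    rw [Set.mem_Ioi] at ht
    rw [hsetEq t ht]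
    have h1 := htail (Real.sqrt t) (Real.sqrt_pos.2 ht)
    have h2 : ((k - 1 : ℕ) : ℝ) * (ε₁ / (4 * ε₂)) * Real.sqrt t ^ 2 / r ^ 2 = b * t := by
      rw [Real.sq_sqrt ht.le, hbdef]
      ring
    rwa [h2] at h1
  have hbound_int : IntegrableOn (fun t => ε₂ / ε₁ * Real.exp (-b * t)) (Set.Ioi 0) :=
    (exp_neg_integrableOn_Ioi 0 hb).const_mul _
  have hg_le' : ∀ t ∈ Set.Ioi 0, (Pr {ω | t < D ω ^ 2}).toReal
      ≤ ε₂ / ε₁ * Real.exp (-b * t) := by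
    intro t ht
    have h := hg_le t ht
    rwa [← neg_mul] at h
  have hg_int : IntegrableOn (fun t => (Pr {ω | t < D ω ^ 2}).toReal) (Set.Ioi 0) := by
    refine Integrable.mono' hbound_int hg_anti.measurable.aestronglyMeasurable ?_
    refine (ae_restrict_iff' measurableSet_Ioi).2 (Filter.Eventually.of_forall fun t ht => ?_)
    rw [Real.norm_eq_abs, abs_of_nonneg ENNReal.toReal_nonneg]
    exact hg_le' t ht
  have hIexp : ∫ t in Set.Ioi 0, ε₂ / ε₁ * Real.exp (-b * t) = ε₂ / ε₁ * (1 / b) := by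
    rw [integral_const_mul]
    congr 1
    have h := integral_comp_mul_left_Ioi (fun u => Real.exp (-u)) 0 hb
    simp only [mul_zero, ← neg_mul] at h
    rw [h, integral_exp_neg_Ioi]
    simp [smul_eq_mul, one_div]
  have hmoment2 : ∫ ω, D ω ^ 2 ∂Pr ≤ ε₂ / ε₁ * (1 / b) := by
    rw [hlayer, ← hIexp]
    exact setIntegral_mono_on hg_int hbound_int measurableSet_Ioi hg_le'
  have hfinal3 : ∫ ω, D ω ^ 2 ∂Pr ≤ 8 * ε₂ ^ 2 / ε₁ ^ 2 * r ^ 2 / k := by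
    refine le_trans hmoment2 ?_
    have hkey : ε₂ / ε₁ * (1 / b) = 4 * ε₂ ^ 2 * r ^ 2 / (ε₁ ^ 2 * ((k - 1 : ℕ) : ℝ)) := by
      rw [hbdef]
      field_simp
    have hk1k : ((k - 1 : ℕ) : ℝ) = (k : ℝ) - 1 := by
      have h1 : (1:ℕ) ≤ k := by omega
      push_cast [Nat.cast_sub h1]
      ring
    have hk2 : (2:ℝ) ≤ (k:ℝ) := by exact_mod_cast hk
    rw [hkey, hk1k, div_le_div_iff₀ (by nlinarith) (by positivity)]
    have hclear : 8 * ε₂ ^ 2 / ε₁ ^ 2 * r ^ 2 * (ε₁ ^ 2 * ((k:ℝ) - 1))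
        = 8 * ε₂ ^ 2 * r ^ 2 * ((k:ℝ) - 1) := by
      field_simp
    rw [hclear]
    have he : (0:ℝ) < ε₂ ^ 2 * r ^ 2 := by positivity
    nlinarith [mul_nonneg (by linarith : (0:ℝ) ≤ (k:ℝ) - 2) he.le]
  -- upper bound for the first moment
  have hfinal2 : ∫ ω, D ω ∂Pr ≤ (1 + 8 * ε₂ ^ 2 / ε₁ ^ 2) / 2 * r / Real.sqrt k := by
    set s0 : ℝ := r / Real.sqrt k with hs0def
    have hs0 : 0 < s0 := by positivity
    have hptwise : ∀ ω, D ω ≤ s0 / 2 + D ω ^ 2 / (2 * s0) := by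
      intro ω
      have h1 : 0 ≤ (D ω - s0) ^ 2 := sq_nonneg _
      rw [div_add_div _ _ (by norm_num) (by positivity), le_div_iff₀ (by positivity)]
      nlinarith
    have hint : Integrable (fun ω => s0 / 2 + D ω ^ 2 / (2 * s0)) Pr :=
      (integrable_const _).add (hD2_int.div_const _)
    have h3 : ∫ ω, D ω ∂Pr ≤ ∫ ω, (s0 / 2 + D ω ^ 2 / (2 * s0)) ∂Pr :=
      integral_mono hD_int hint (fun ω => hptwise ω)
    have h4 : ∫ ω, (s0 / 2 + D ω ^ 2 / (2 * s0)) ∂Pr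
        = s0 / 2 + (∫ ω, D ω ^ 2 ∂Pr) / (2 * s0) := by
      rw [integral_add (integrable_const _) (hD2_int.div_const _), integral_const,
        integral_div]
      simp [measure_univ]
    have h5 : (∫ ω, D ω ^ 2 ∂Pr) / (2 * s0) ≤ (8 * ε₂ ^ 2 / ε₁ ^ 2 * r ^ 2 / k) / (2 * s0) :=
      div_le_div_of_nonneg_right hfinal3 (by positivity)
    have h6 : s0 / 2 + (8 * ε₂ ^ 2 / ε₁ ^ 2 * r ^ 2 / k) / (2 * s0)
        = (1 + 8 * ε₂ ^ 2 / ε₁ ^ 2) / 2 * r / Real.sqrt k := by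
      set u := Real.sqrt k with hudef
      rw [hs0def, ← hsksq]
      field_simp
    calc ∫ ω, D ω ∂Pr ≤ s0 / 2 + (∫ ω, D ω ^ 2 ∂Pr) / (2 * s0) := by rw [← h4]; exact h3
    _ ≤ s0 / 2 + (8 * ε₂ ^ 2 / ε₁ ^ 2 * r ^ 2 / k) / (2 * s0) := by linarith
    _ = _ := h6
  -- lower bound for the first moment
  have hfinal1 : Real.sqrt (ε₁ / (8 * ε₂)) / 2 * r / Real.sqrt k ≤ ∫ ω, D ω ∂Pr := by
    set t0 : ℝ := Real.sqrt (ε₁ / (8 * ε₂)) * (r / Real.sqrt k) with ht0def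
    have ht0 : 0 < t0 := by positivity
    have ht0sq : t0 ^ 2 = ε₁ / (8 * ε₂) * (r ^ 2 / k) := by
      rw [ht0def, mul_pow, Real.sq_sqrt (by positivity), div_pow, Real.sq_sqrt hkpos.le]
    have hsub : {ω | D ω ≤ t0} ⊆ ⋃ i ∈ T, {ω | dist (Z lastI ω) (Z i ω) ≤ t0} := by
      intro ω hω
      obtain ⟨i, hiT, hval⟩ := Finset.exists_mem_eq_inf' hTne
        (fun i => dist (Z lastI ω) (Z i ω))
      have : dist (Z lastI ω) (Z i ω) ≤ t0 := by
        rw [← hval, ← hD_eq ω]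
        exact hω
      exact Set.mem_iUnion₂.2 ⟨i, hiT, this⟩
    have hSmeas : MeasurableSet {p : (ℝ × ℝ) × (ℝ × ℝ) | dist p.1 p.2 ≤ t0} := by
      have hc : Continuous fun p : (ℝ × ℝ) × (ℝ × ℝ) => dist p.1 p.2 :=
        continuous_fst.dist continuous_snd
      exact measurableSet_le hc.measurable measurable_const
    have hpair : ∀ i ∈ T, Pr {ω | dist (Z lastI ω) (Z i ω) ≤ t0}
        ≤ ENNReal.ofReal (ε₂ / (ε₁ * r ^ 2) * (2 * t0 * (2 * t0))) := by
      intro i hiT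
      have hne : lastI ≠ i := by
        rw [hTerase, Finset.mem_erase] at hiT
        exact (hiT.1).symm
      have hind : IndepFun (Z lastI) (Z i) Pr := hZindep.indepFun hne
      have hmapPair : Measure.map (fun ω => (Z lastI ω, Z i ω)) Pr = ν.prod ν := by
        have h := (indepFun_iff_map_prod_eq_prod_map_map (hZmeas lastI).aemeasurable
          (hZmeas i).aemeasurable).1 hind
        rwa [hmap lastI, hmap i] at h
      have hPr : Pr {ω | dist (Z lastI ω) (Z i ω) ≤ t0}
          = (ν.prod ν) {p : (ℝ × ℝ) × (ℝ × ℝ) | dist p.1 p.2 ≤ t0} := by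
        rw [← hmapPair, Measure.map_apply ((hZmeas lastI).prodMk (hZmeas i)) hSmeas]
        rfl
      rw [hPr, Measure.prod_apply hSmeas]
      have hslice : ∀ x : ℝ × ℝ, ν (Prod.mk x ⁻¹' {p : (ℝ × ℝ) × (ℝ × ℝ) | dist p.1 p.2 ≤ t0})
          ≤ ENNReal.ofReal (ε₂ / (ε₁ * r ^ 2) * (2 * t0 * (2 * t0))) := by
        intro x
        have hsliceeq : Prod.mk x ⁻¹' {p : (ℝ × ℝ) × (ℝ × ℝ) | dist p.1 p.2 ≤ t0}
            = Metric.closedBall x t0 := by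
          ext y
          simp [Metric.mem_closedBall, dist_comm]
        rw [hsliceeq]
        have hvolcb : volume (Metric.closedBall x t0) = ENNReal.ofReal (2 * t0 * (2 * t0)) := by
          rw [← closedBall_prod_same x.1 x.2 t0, Measure.volume_eq_prod, Measure.prod_prod,
            Real.closedBall_eq_Icc, Real.closedBall_eq_Icc, Real.volume_Icc, Real.volume_Icc,
            ← ENNReal.ofReal_mul (by linarith)]
          congr 1
          ring
        calc ν (Metric.closedBall x t0)
            ≤ ENNReal.ofReal (ε₂ / (ε₁ * r ^ 2)) * volume (Metric.closedBall x t0) :=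
              hν_le _ Metric.isClosed_closedBall.measurableSet
        _ = ENNReal.ofReal (ε₂ / (ε₁ * r ^ 2) * (2 * t0 * (2 * t0))) := by
              rw [hvolcb, ← ENNReal.ofReal_mul (by positivity)]
      calc (∫⁻ x, ν (Prod.mk x ⁻¹' {p : (ℝ × ℝ) × (ℝ × ℝ) | dist p.1 p.2 ≤ t0}) ∂ν)
          ≤ ∫⁻ _, ENNReal.ofReal (ε₂ / (ε₁ * r ^ 2) * (2 * t0 * (2 * t0))) ∂ν :=
            lintegral_mono hslice
      _ = ENNReal.ofReal (ε₂ / (ε₁ * r ^ 2) * (2 * t0 * (2 * t0))) := by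
            rw [lintegral_const, measure_univ, mul_one]
    have hAle : Pr {ω | D ω ≤ t0} ≤ ENNReal.ofReal (1 / 2) := by
      calc Pr {ω | D ω ≤ t0}
          ≤ ∑ i ∈ T, Pr {ω | dist (Z lastI ω) (Z i ω) ≤ t0} :=
            le_trans (measure_mono hsub) (measure_biUnion_finset_le T _)
      _ ≤ ∑ _i ∈ T, ENNReal.ofReal (ε₂ / (ε₁ * r ^ 2) * (2 * t0 * (2 * t0))) :=
            Finset.sum_le_sum hpair
      _ = ((k - 1 : ℕ) : ℝ≥0∞) * ENNReal.ofReal (ε₂ / (ε₁ * r ^ 2) * (2 * t0 * (2 * t0))) := by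
            rw [Finset.sum_const, hTcard, nsmul_eq_mul]
      _ = ENNReal.ofReal (((k - 1 : ℕ) : ℝ) * (ε₂ / (ε₁ * r ^ 2) * (2 * t0 * (2 * t0)))) := by
            rw [← ENNReal.ofReal_natCast (k - 1), ← ENNReal.ofReal_mul (by positivity)]
      _ ≤ ENNReal.ofReal (1 / 2) := by
            apply ENNReal.ofReal_le_ofReal
            have hexpand : ((k - 1 : ℕ) : ℝ) * (ε₂ / (ε₁ * r ^ 2) * (2 * t0 * (2 * t0)))
                = ((k - 1 : ℕ) : ℝ) * (ε₂ / (ε₁ * r ^ 2) * (4 * (ε₁ / (8 * ε₂) * (r ^ 2 / k)))) := by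
              have : 2 * t0 * (2 * t0) = 4 * t0 ^ 2 := by ring
              rw [this, ht0sq]
            rw [hexpand]
            have hk1k : ((k - 1 : ℕ) : ℝ) = (k : ℝ) - 1 := by
              have h1 : (1:ℕ) ≤ k := by omega
              push_cast [Nat.cast_sub h1]
              ring
            rw [hk1k]
            have heq : ((k:ℝ) - 1) * (ε₂ / (ε₁ * r ^ 2) * (4 * (ε₁ / (8 * ε₂) * (r ^ 2 / k))))
                = ((k:ℝ) - 1) / (2 * k) := by
              field_simp
              ring
            rw [heq]
            rw [div_le_div_iff₀ (by positivity) (by norm_num)]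
            linarith
    have hAmeas : MeasurableSet {ω | D ω ≤ t0} :=
      measurableSet_le hD_meas measurable_const
    have hBge : ENNReal.ofReal (1 / 2) ≤ Pr {ω | t0 < D ω} := by
      have hcompl : {ω | t0 < D ω} = {ω | D ω ≤ t0}ᶜ := by
        ext ω; simp [not_le]
      rw [hcompl, prob_compl_eq_one_sub hAmeas]
      have h1 : (1:ℝ≥0∞) - ENNReal.ofReal (1 / 2) ≤ 1 - Pr {ω | D ω ≤ t0} :=
        tsub_le_tsub_left hAle 1
      have h2 : (1:ℝ≥0∞) - ENNReal.ofReal (1 / 2) = ENNReal.ofReal (1 / 2) := by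
        rw [← ENNReal.ofReal_one, ← ENNReal.ofReal_sub _ (by norm_num)]
        norm_num
      rw [← h2]
      exact h1
    have htoR : 1 / 2 ≤ (Pr {ω | t0 < D ω}).toReal :=
      (ENNReal.ofReal_le_iff_le_toReal (measure_ne_top Pr _)).1 hBge
    have hstep1 : t0 * (1 / 2) ≤ t0 * (Pr {ω | t0 < D ω}).toReal :=
      mul_le_mul_of_nonneg_left htoR ht0.le
    have hA'meas : MeasurableSet {ω | t0 < D ω} :=
      measurableSet_lt measurable_const hD_meas
    have hstep2 : t0 * (Pr {ω | t0 < D ω}).toReal ≤ ∫ ω in {ω | t0 < D ω}, D ω ∂Pr := by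
      have hconst : ∫ _ω in {ω | t0 < D ω}, t0 ∂Pr = (Pr {ω | t0 < D ω}).toReal * t0 := by
        rw [setIntegral_const, smul_eq_mul, measureReal_def]
      rw [mul_comm] at hconst
      rw [← hconst]
      exact setIntegral_mono_on (integrableOn_const (measure_ne_top Pr _))
        hD_int.integrableOn hA'meas fun ω hω => le_of_lt hω
    have hstep3 : ∫ ω in {ω | t0 < D ω}, D ω ∂Pr ≤ ∫ ω, D ω ∂Pr :=
      setIntegral_le_integral hD_int (Filter.Eventually.of_forall fun ω => hD_nonneg ω)
    have hfin : Real.sqrt (ε₁ / (8 * ε₂)) / 2 * r / Real.sqrt k = t0 * (1 / 2) := by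
      rw [ht0def]
      ring
    rw [hfin]
    exact le_trans hstep1 (le_trans hstep2 hstep3)
  exact ⟨hfinal1, hfinal2, hfinal3⟩

end
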